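/- For all N ∈ ℕ and 2 ≤ k ≤ N, define ω_{N,k}(q) = Σ_{m=k}^{N} (-1)^{m-1} binom_q(N,m) · ((q²;q²)_m/(q²;q²)_{m-k}) · q^{(1-N)m}. Then ω_{N,k}(q) = 0 if k ≠ N, and ω_{N,N}(q) = (-1)^{N-1}(q²;q²)_N q^{(1-N)N}. -/

import Mathlib

open Finset

noncomputable section

/-- The indeterminate `q` in `ℚ(q)`. -/
def q : RatFunc ℚ := RatFunc.X

/-- The balanced quantum integer `[m]_q = (q^m - q^{-m})/(q - q^{-1})`. -/
def qnum (m : ℕ) : RatFunc ℚ := (q ^ (m : ℤ) - q ^ (-(m : ℤ))) / (q - q⁻¹)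

/-- The balanced quantum factorial `[m]_q!`. -/
def qfact : ℕ → RatFunc ℚ
  | 0 => 1
  | n + 1 => qfact n * qnum (n + 1)

/-- The balanced Gaussian binomial coefficient. -/
def qbinom (n k : ℕ) : RatFunc ℚ := qfact n / (qfact k * qfact (n - k))

/-- The q-Pochhammer symbol `(q²;q²)_m = Π_{j=1}^m (1 - q^{2j})`. -/
def poch2 (m : ℕ) : RatFunc ℚ := ∏ j ∈ Icc 1 m, (1 - q ^ (2 * j))

/-- `ω_{N,k}(q) = Σ_{m=k}^{N} (-1)^{m-1} [N choose m]_q ((q²;q²)_m/(q²;q²)_{m-k}) q^{(1-N)m}`. -/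
def omegaNk (N k : ℕ) : RatFunc ℚ :=
  ∑ m ∈ Icc k N,
    (-1 : RatFunc ℚ) ^ (m - 1) * qbinom N m * (poch2 m / poch2 (m - k)) *
      q ^ ((1 - (N : ℤ)) * m)

/- ### Auxiliary lemmas -/

lemma q_ne_zero : q ≠ 0 := RatFunc.X_ne_zero

lemma qpow_ne (a : ℤ) : q ^ a ≠ 0 := zpow_ne_zero a q_ne_zero

lemma q_pow_ne_one {n : ℕ} (hn : n ≠ 0) : q ^ n ≠ 1 := by
  intro h
  have h2 : (algebraMap (Polynomial ℚ) (RatFunc ℚ)) (Polynomial.X ^ n) =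
      (algebraMap (Polynomial ℚ) (RatFunc ℚ)) 1 := by
    simpa [q, map_pow, RatFunc.algebraMap_X] using h
  have := congrArg Polynomial.natDegree (RatFunc.algebraMap_injective ℚ h2)
  simp [Polynomial.natDegree_X_pow] at this
  exact hn this

lemma one_sub_q_pow_ne {j : ℕ} (hj : j ≠ 0) : (1 : RatFunc ℚ) - q ^ (2 * j) ≠ 0 := by
  intro h
  have : q ^ (2 * j) = 1 := by linear_combination -h
  exact q_pow_ne_one (by omega) this

lemma one_sub_q2_ne : (1 : RatFunc ℚ) - q ^ 2 ≠ 0 := by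
  simpa using one_sub_q_pow_ne (j := 1) one_ne_zero

lemma sub_inv_ne : q - q⁻¹ ≠ 0 := by
  rw [sub_ne_zero]
  intro h
  have : q ^ 2 = 1 := by
    rw [pow_two]; nth_rewrite 2 [h]; exact mul_inv_cancel₀ q_ne_zero
  exact q_pow_ne_one (by norm_num) this

lemma poch2_ne_zero (m : ℕ) : poch2 m ≠ 0 := by
  rw [poch2]
  exact prod_ne_zero_iff.2 fun j hj => one_sub_q_pow_ne (by simp at hj; omega)

lemma poch2_zero : poch2 0 = 1 := by simp [poch2]

lemma poch2_succ (m : ℕ) : poch2 (m + 1) = poch2 m * (1 - q ^ (2 * (m + 1))) := by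
  rw [poch2, poch2, ← Finset.prod_Icc_succ_top (by omega)]

lemma qnum_eq (m : ℕ) : qnum m * (1 - q ^ 2) * q ^ ((m : ℤ) - 1) = 1 - q ^ (2 * m) := by
  have hq := q_ne_zero
  rw [qnum, div_mul_eq_mul_div, div_mul_eq_mul_div, div_eq_iff sub_inv_ne]
  have hden : q - q⁻¹ = q ^ (-1 : ℤ) * (q ^ (2 : ℤ) - 1) := by
    rw [zpow_neg_one, mul_sub, show ((2:ℤ)) = ((2:ℕ):ℤ) from rfl, zpow_natCast,
      pow_two, inv_mul_cancel_left₀ hq, mul_one]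
  rw [hden, ← zpow_natCast q (2 * m), ← zpow_natCast q 2]
  push_cast
  simp only [sub_mul, mul_sub, one_mul, mul_one, ← zpow_add₀ hq]
  ring_nf

lemma qfact_eq (m : ℕ) :
    qfact m * (1 - q ^ 2) ^ m * q ^ ((m.choose 2 : ℤ)) = poch2 m := by
  induction m with
  | zero => simp [qfact, poch2_zero]
  | succ n ih =>
      have hch : ((n + 1).choose 2 : ℤ) = (n : ℤ) + (n.choose 2 : ℤ) := by
        rw [Nat.choose_succ_succ]
        push_cast [Nat.choose_one_right]
        ring
      have hnum := qnum_eq (n + 1)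
      have : (((n : ℕ) + 1 : ℕ) : ℤ) - 1 = (n : ℤ) := by push_cast; ring
      rw [this] at hnum
      calc qfact (n + 1) * (1 - q ^ 2) ^ (n + 1) * q ^ (((n + 1).choose 2 : ℤ))
          = (qfact n * (1 - q ^ 2) ^ n * q ^ ((n.choose 2 : ℤ))) *
            (qnum (n + 1) * (1 - q ^ 2) * q ^ ((n : ℤ))) := by
            rw [hch, zpow_add₀ q_ne_zero, qfact, pow_succ]
            ring
        _ = poch2 n * (1 - q ^ (2 * (n + 1))) := by rw [ih, hnum]
        _ = poch2 (n + 1) := (poch2_succ n).symm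

lemma qfact_ne_zero (m : ℕ) : qfact m ≠ 0 := by
  intro h
  have := qfact_eq m
  rw [h] at this
  simp at this
  exact poch2_ne_zero m this.symm

lemma choose_two_add (a b : ℕ) : (a + b).choose 2 = a.choose 2 + b.choose 2 + a * b := by
  induction b with
  | zero => simp
  | succ n ih =>
      have h1 : (a + (n + 1)) = (a + n) + 1 := by omega
      rw [h1, Nat.choose_succ_succ, Nat.choose_succ_succ n, Nat.choose_one_right,
        Nat.choose_one_right, ih]
      ring

lemma qbinom_eq {N m : ℕ} (h : m ≤ N) :
    qbinom N m * (q ^ (((m * (N - m) : ℕ)) : ℤ) * poch2 m * poch2 (N - m)) = poch2 N := by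
  have hq := q_ne_zero
  rw [qbinom, div_mul_eq_mul_div, div_eq_iff (mul_ne_zero (qfact_ne_zero m) (qfact_ne_zero (N - m)))]
  rw [← qfact_eq N, ← qfact_eq m, ← qfact_eq (N - m)]
  have hN : N = m + (N - m) := by omega
  have hpow : ((1 : RatFunc ℚ) - q ^ 2) ^ N = (1 - q ^ 2) ^ m * (1 - q ^ 2) ^ (N - m) := by
    nth_rewrite 1 [hN]; rw [pow_add]
  have hch : (N.choose 2 : ℤ) = ((m * (N - m) : ℕ) : ℤ) + (m.choose 2 : ℤ) + ((N - m).choose 2 : ℤ) := by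
    have := choose_two_add m (N - m)
    rw [← hN] at this
    push_cast [this]
    ring
  rw [hpow, hch, zpow_add₀ hq, zpow_add₀ hq]
  ring

/-- Recursive Gaussian binomial in `t = q²`. -/
def G : ℕ → ℕ → RatFunc ℚ
  | _, 0 => 1
  | 0, _ + 1 => 0
  | n + 1, j + 1 => G n j + q ^ (2 * (j + 1)) * G n (j + 1)

lemma G_zero_of_lt : ∀ {n j : ℕ}, n < j → G n j = 0 := by
  intro n
  induction n with
  | zero => intro j hj; cases j with
      | zero => omega
      | succ j => rfl
  | succ n ih =>
      intro j hj
      cases j with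
      | zero => omega
      | succ j =>
          rw [G, ih (by omega), ih (by omega)]
          ring

lemma G_diag (n : ℕ) : G n n = 1 := by
  induction n with
  | zero => rfl
  | succ n ih => rw [G, ih, G_zero_of_lt (by omega)]; ring

lemma G_mul : ∀ n : ℕ, ∀ {j : ℕ}, j ≤ n → G n j * (poch2 j * poch2 (n - j)) = poch2 n := by
  intro n
  induction n with
  | zero => intro j hj; interval_cases j; simp [G, poch2_zero]
  | succ n ih =>
      intro j hj
      cases j with
      | zero => simp [G, poch2_zero]
      | succ j =>
          rcases eq_or_lt_of_le hj with heq | hlt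
          · rw [heq] at *
            rw [G_diag, Nat.sub_self, poch2_zero]
            ring
          · have hj' : j + 1 ≤ n := by omega
            have hjn : j ≤ n := by omega
            have ih1 := ih hjn
            have ih2 := ih hj'
            rw [G]
            have e1 : n + 1 - (j + 1) = n - j := by omega
            have e2 : n - j = (n - (j + 1)) + 1 := by omega
            have e3 : poch2 (n - j) = poch2 (n - (j + 1)) * (1 - q ^ (2 * (n - j))) := by
              rw [e2, poch2_succ, ← e2]
            have e4 : q ^ (2 * (j + 1)) * q ^ (2 * (n - j)) = q ^ (2 * (n + 1)) := by
              rw [← pow_add]; congr 1; omega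
            rw [e1, poch2_succ j, poch2_succ n]
            calc (G n j + q ^ (2 * (j + 1)) * G n (j + 1)) *
                  (poch2 j * (1 - q ^ (2 * (j + 1))) * poch2 (n - j))
                = (G n j * (poch2 j * poch2 (n - j))) * (1 - q ^ (2 * (j + 1)))
                  + q ^ (2 * (j + 1)) * (G n (j + 1) * ((poch2 j * (1 - q ^ (2 * (j + 1)))) *
                    (poch2 (n - (j + 1)) * (1 - q ^ (2 * (n - j)))))) := by
                    rw [e3]; ring
              _ = poch2 n * (1 - q ^ (2 * (j + 1)))
                  + q ^ (2 * (j + 1)) * (poch2 n * (1 - q ^ (2 * (n - j)))) := by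
                    rw [ih1]
                    congr 2
                    calc G n (j + 1) * ((poch2 j * (1 - q ^ (2 * (j + 1)))) *
                          (poch2 (n - (j + 1)) * (1 - q ^ (2 * (n - j)))))
                        = (G n (j + 1) * (poch2 (j + 1) * poch2 (n - (j + 1)))) *
                          (1 - q ^ (2 * (n - j))) := by rw [poch2_succ j]; ring
                      _ = poch2 n * (1 - q ^ (2 * (n - j))) := by rw [ih2]
              _ = poch2 n * (1 - q ^ (2 * (n + 1))) := by
                    rw [← e4]; ring

/-- The q-binomial theorem in `t = q²`. -/
lemma qbt : ∀ n : ℕ, ∀ x : RatFunc ℚ,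
    ∑ j ∈ range (n + 1), (-1 : RatFunc ℚ) ^ j * q ^ (j * (j - 1)) * x ^ j * G n j
      = ∏ i ∈ range n, (1 - x * q ^ (2 * i)) := by
  intro n
  induction n with
  | zero => intro x; simp [G]
  | succ n ih =>
      intro x
      have key : ∀ j ∈ range (n + 1),
          (-1 : RatFunc ℚ) ^ (j + 1) * q ^ ((j + 1) * (j + 1 - 1)) * x ^ (j + 1) * G (n + 1) (j + 1)
          = (-x) * ((-1 : RatFunc ℚ) ^ j * q ^ (j * (j - 1)) * (q ^ 2 * x) ^ j * G n j)
            + (-1 : RatFunc ℚ) ^ (j + 1) * q ^ ((j + 1) * (j + 1 - 1)) * (q ^ 2 * x) ^ (j + 1)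
              * G n (j + 1) := by
        intro j _
        have h1 : (j + 1) * (j + 1 - 1) = j * (j - 1) + 2 * j := by
          cases j with
          | zero => norm_num
          | succ i => simp [Nat.succ_sub_one]; ring
        rw [G, h1]
        simp only [mul_pow, ← pow_mul, pow_add]
        ring
      rw [Finset.sum_range_succ' _ (n + 1), Finset.sum_congr rfl key, Finset.sum_add_distrib,
        ← Finset.mul_sum, ih (q ^ 2 * x)]
      have h2 : (∑ j ∈ range (n + 1), (-1 : RatFunc ℚ) ^ (j + 1) * q ^ ((j + 1) * (j + 1 - 1))
            * (q ^ 2 * x) ^ (j + 1) * G n (j + 1))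
          + (-1 : RatFunc ℚ) ^ 0 * q ^ (0 * (0 - 1)) * x ^ 0 * G (n + 1) 0
          = ∏ i ∈ range n, (1 - (q ^ 2 * x) * q ^ (2 * i)) := by
        have e0 : ((-1 : RatFunc ℚ) ^ 0 * q ^ (0 * (0 - 1)) * x ^ 0 * G (n + 1) 0)
            = (-1 : RatFunc ℚ) ^ 0 * q ^ (0 * (0 - 1)) * (q ^ 2 * x) ^ 0 * G n 0 := by
          have g1 : G (n+1) 0 = 1 := by simp [G]
          have g2 : G n 0 = 1 := by cases n <;> simp [G]
          rw [g1, g2]; norm_num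
        rw [e0, ← Finset.sum_range_succ' (fun j => (-1 : RatFunc ℚ) ^ j * q ^ (j * (j - 1))
          * (q ^ 2 * x) ^ j * G n j) (n + 1), Finset.sum_range_succ,
          G_zero_of_lt (Nat.lt_succ_self n), ih (q ^ 2 * x)]
        ring
      rw [add_assoc, h2]
      rw [Finset.prod_range_succ' (fun i => 1 - x * q ^ (2 * i)) n]
      have h3 : ∀ i ∈ range n, (1 : RatFunc ℚ) - (q ^ 2 * x) * q ^ (2 * i)
          = 1 - x * q ^ (2 * (i + 1)) := by
        intro i _
        have : (2 : ℕ) * (i + 1) = 2 + 2 * i := by ring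
        rw [this, pow_add]
        ring
      rw [Finset.prod_congr rfl h3]
      simp only [mul_zero, pow_zero, mul_one]
      ring

lemma cast_jj (j : ℕ) : ((j * (j - 1) : ℕ) : ℤ) = (j : ℤ) * ((j : ℤ) - 1) := by
  cases j with
  | zero => simp
  | succ i => push_cast [Nat.succ_sub_one]; ring

/-- for `2 ≤ k ≤ N`, `ω_{N,k}(q) = 0` if `k ≠ N` and
`ω_{N,N}(q) = (-1)^{N-1}(q²;q²)_N q^{(1-N)N}`. -/
theorem stmt15 (N k : ℕ) (hk : 2 ≤ k) (hkN : k ≤ N) :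
    (k ≠ N → omegaNk N k = 0) ∧
    (k = N → omegaNk N k =
      (-1 : RatFunc ℚ) ^ (N - 1) * poch2 N * q ^ ((1 - (N : ℤ)) * N)) := by
  constructor
  · intro hne
    have hkN' : k < N := lt_of_le_of_ne hkN hne
    set n := N - k with hn
    have hn1 : 1 ≤ n := by omega
    rw [omegaNk, ← Finset.Ico_add_one_right_eq_Icc, Finset.sum_Ico_eq_sum_range]
    have hrange : N + 1 - k = n + 1 := by omega
    rw [hrange]
    set x : RatFunc ℚ := q ^ ((2 : ℤ) * ((k : ℤ) + 1 - N)) with hx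
    set C : RatFunc ℚ := (-1 : RatFunc ℚ) ^ (k - 1) * (poch2 N / poch2 n) *
      q ^ ((k : ℤ) * ((k : ℤ) + 1 - 2 * N)) with hC
    have hterm : ∀ j ∈ range (n + 1),
        (-1 : RatFunc ℚ) ^ (k + j - 1) * qbinom N (k + j) * (poch2 (k + j) / poch2 (k + j - k))
          * q ^ ((1 - (N : ℤ)) * ((k + j : ℕ) : ℤ))
        = C * ((-1 : RatFunc ℚ) ^ j * q ^ (j * (j - 1)) * x ^ j * G n j) := by
      intro j hj
      simp only [mem_range] at hj
      have hjn : j ≤ n := by omega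
      have hmN : k + j ≤ N := by omega
      have hNm : N - (k + j) = n - j := by omega
      have hmk : k + j - k = j := by omega
      have hqb : qbinom N (k + j) = poch2 N /
          (q ^ ((((k + j) * (N - (k + j)) : ℕ)) : ℤ) * poch2 (k + j) * poch2 (N - (k + j))) := by
        rw [eq_div_iff (mul_ne_zero (mul_ne_zero (qpow_ne _) (poch2_ne_zero _)) (poch2_ne_zero _))]
        exact qbinom_eq hmN
      have hG : G n j = poch2 n / (poch2 j * poch2 (n - j)) := by
        rw [eq_div_iff (mul_ne_zero (poch2_ne_zero _) (poch2_ne_zero _))]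
        exact G_mul n hjn
      rw [hqb, hG, hmk, hC, hx]
      have hsgn : (-1 : RatFunc ℚ) ^ (k + j - 1) = (-1 : RatFunc ℚ) ^ (k - 1) * (-1) ^ j := by
        rw [← pow_add]; congr 1; omega
      rw [hsgn]
      -- convert all q powers to zpow and merge exponents
      rw [← zpow_natCast q (j * (j - 1)), ← zpow_natCast (q ^ ((2:ℤ) * ((k:ℤ) + 1 - N))) j,
        ← zpow_mul]
      have hcast : (((k + j) * (N - (k + j)) : ℕ) : ℤ) = ((k : ℤ) + j) * ((N : ℤ) - (k + j)) := by
        push_cast [Nat.cast_sub hmN]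
        ring
      rw [hcast, hNm, cast_jj]
      have hexp : q ^ ((1 - (N : ℤ)) * ((k + j : ℕ) : ℤ)) =
          q ^ (((k:ℤ) + j) * ((N:ℤ) - (k + j))) * q ^ ((k:ℤ) * ((k:ℤ) + 1 - 2 * N)) *
          q ^ ((j:ℤ) * ((j:ℤ) - 1)) * q ^ ((2:ℤ) * ((k:ℤ) + 1 - N) * j) := by
        rw [← zpow_add₀ q_ne_zero, ← zpow_add₀ q_ne_zero, ← zpow_add₀ q_ne_zero]
        congr 1
        push_cast
        ring
      rw [hexp]
      field_simp [poch2_ne_zero, qpow_ne]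
    rw [Finset.sum_congr rfl hterm, ← Finset.mul_sum, qbt n x]
    have hzero : (1 : RatFunc ℚ) - x * q ^ (2 * (n - 1)) = 0 := by
      rw [hx, ← zpow_natCast q (2 * (n - 1)), ← zpow_add₀ q_ne_zero]
      have : (2 : ℤ) * ((k : ℤ) + 1 - N) + ((2 * (n - 1) : ℕ) : ℤ) = 0 := by omega
      rw [this, zpow_zero, sub_self]
    rw [Finset.prod_eq_zero (i := n - 1) (by simp; omega) hzero, mul_zero]
  · intro heq
    subst heq
    rw [omegaNk, Finset.Icc_self, Finset.sum_singleton, Nat.sub_self, poch2_zero,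
      qbinom, Nat.sub_self]
    have : qfact 0 = 1 := rfl
    rw [this, mul_one, div_self (qfact_ne_zero k), mul_one, div_one]
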